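/- Optimal no-signal budget in the geometric example: (i) if v ≤ 2k then U(v,k,B) ≤ 0 = U(v,k,0) for every natural number B, so B* = 0 is optimal; (ii) if v > 2k then U(v,k,B) < U(v,k,B+1) for every natural number B, and U(v,k,B) → v − 2k as B → ∞, so no finite budget is optimal and the supremum of the attacker's utility is v − 2k (informally, B* = ∞ and the attacker cracks all passwords). -/
import Mathlib


/- Geometric example: Pr[pw_i] = 2^{-i}, attacker checks pw_1, pw_2, … with budget B.
Expected cost C(k,B) = k·Σ_{i=1}^{B} i·2^{-i} + k·B·2^{-B},
expected reward R(v,B) = v·Σ_{i=1}^{B} 2^{-i}, and utility U = R − C. -/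

noncomputable def C (k : ℝ) (B : ℕ) : ℝ :=
  k * (∑ i ∈ Finset.Icc 1 B, (i : ℝ) * (2 : ℝ) ^ (-(i : ℤ)))
    + k * (B : ℝ) * (2 : ℝ) ^ (-(B : ℤ))

noncomputable def R (v : ℝ) (B : ℕ) : ℝ :=
  v * ∑ i ∈ Finset.Icc 1 B, (2 : ℝ) ^ (-(i : ℤ))

noncomputable def U (v k : ℝ) (B : ℕ) : ℝ := R v B - C k B

lemma sum1 (B : ℕ) : ∑ i ∈ Finset.Icc 1 B, (2 : ℝ) ^ (-(i : ℤ)) = 1 - (2:ℝ) ^ (-(B:ℤ)) := by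
  induction B with
  | zero => simp
  | succ n ih =>
    rw [Finset.sum_Icc_succ_top (by omega), ih]
    push_cast
    rw [neg_add, zpow_add₀ (by norm_num : (2:ℝ) ≠ 0)]
    ring

lemma sum2 (B : ℕ) : ∑ i ∈ Finset.Icc 1 B, (i : ℝ) * (2 : ℝ) ^ (-(i : ℤ)) =
    2 - ((B:ℝ) + 2) * (2:ℝ) ^ (-(B:ℤ)) := by
  induction B with
  | zero => simp
  | succ n ih =>
    rw [Finset.sum_Icc_succ_top (by omega), ih]
    push_cast
    rw [neg_add, zpow_add₀ (by norm_num : (2:ℝ) ≠ 0)]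
    ring

lemma U_eq (v k : ℝ) (B : ℕ) : U v k B = (v - 2*k) * (1 - (2:ℝ) ^ (-(B:ℤ))) := by
  simp only [U, R, C, sum1, sum2]
  ring

lemma zpow_eq (B : ℕ) : (2:ℝ) ^ (-(B:ℤ)) = (1/2 : ℝ) ^ B := by
  rw [zpow_neg, ← zpow_natCast]
  simp

/-- Optimal no-signal budget in the geometric example: (i) if v ≤ 2k then
U(v,k,B) ≤ 0 = U(v,k,0) for every B, so B* = 0 is optimal; (ii) if v > 2k then
U(v,k,B) < U(v,k,B+1) for every B, U(v,k,B) → v − 2k as B → ∞, and the supremum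
of the attacker's utility is v − 2k (so no finite budget is optimal). -/
theorem geometric_optimal_budget (v k : ℝ) :
    (v ≤ 2 * k → U v k 0 = 0 ∧ ∀ B : ℕ, U v k B ≤ U v k 0) ∧
    (2 * k < v →
      (∀ B : ℕ, U v k B < U v k (B + 1)) ∧
      Filter.Tendsto (fun B : ℕ => U v k B) Filter.atTop (nhds (v - 2 * k)) ∧
      (⨆ B : ℕ, U v k B) = v - 2 * k) := by
  have h0 : U v k 0 = 0 := by rw [U_eq]; simp
  have hpow : ∀ B : ℕ, 0 < (2:ℝ) ^ (-(B:ℤ)) := fun B => by positivity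
  have hle1 : ∀ B : ℕ, (2:ℝ) ^ (-(B:ℤ)) ≤ 1 := by
    intro B
    rw [zpow_eq]
    exact pow_le_one₀ (by norm_num) (by norm_num)
  constructor
  · intro hv
    refine ⟨h0, fun B => ?_⟩
    rw [U_eq, h0]
    have := hle1 B
    nlinarith [hpow B]
  · intro hv
    have hmono : ∀ B : ℕ, U v k B < U v k (B + 1) := by
      intro B
      rw [U_eq, U_eq]
      have h1 : (2:ℝ) ^ (-((B:ℕ)+1:ℤ)) < (2:ℝ) ^ (-(B:ℤ)) := by
        apply zpow_lt_zpow_right₀ (by norm_num) (by omega)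
      have h2 : (2:ℝ) ^ (-(((B+1):ℕ):ℤ)) = (2:ℝ) ^ (-((B:ℕ)+1:ℤ)) := by push_cast; ring_nf
      rw [h2]
      nlinarith
    have htend : Filter.Tendsto (fun B : ℕ => U v k B) Filter.atTop (nhds (v - 2 * k)) := by
      have h1 : Filter.Tendsto (fun B : ℕ => (1/2 : ℝ) ^ B) Filter.atTop (nhds 0) :=
        tendsto_pow_atTop_nhds_zero_of_lt_one (by norm_num) (by norm_num)
      have h2 : Filter.Tendsto (fun B : ℕ => (v - 2*k) * (1 - (1/2 : ℝ) ^ B))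
          Filter.atTop (nhds ((v - 2*k) * (1 - 0))) :=
        Filter.Tendsto.const_mul _ (Filter.Tendsto.const_sub _ h1)
      simp only [sub_zero, mul_one] at h2
      convert h2 using 2 with B
      rw [U_eq, zpow_eq]
    refine ⟨hmono, htend, ?_⟩
    have hbdd : BddAbove (Set.range fun B : ℕ => U v k B) := by
      refine ⟨v - 2*k, ?_⟩
      rintro x ⟨B, rfl⟩
      simp only [U_eq]
      nlinarith [hpow B, hle1 B]
    have hm : Monotone (fun B : ℕ => U v k B) :=
      monotone_nat_of_le_succ (fun n => (hmono n).le)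
    exact tendsto_nhds_unique (tendsto_atTop_ciSup hm hbdd) htend
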